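/- Let F(z) = ∑_{n≥0} (-1)^n z^n / ([n]_q!)^2 and G(z) = ∑_{n≥0} W_n(q) z^n / ([n]_q!)^2, as formal power series in z over the field of rational functions in q, where W_n(q) = ∑ q^{inv(σ)+inv(τ)} over pairs of permutations of {1,...,n} with no common ascent. Then F(z)·G(z) = 1. -/

import Mathlib

open Finset

/-- A common ascent of a pair of permutations of `{1,...,n}`:
an index `i` with `i+1 = j ≤ n` such that both permutations increase from `i` to `j`. -/
def CommonAscent {n : ℕ} (σ τ : Equiv.Perm (Fin n)) : Prop :=
  ∃ i j : Fin n, (i : ℕ) + 1 = (j : ℕ) ∧ σ i < σ j ∧ τ i < τ j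

instance {n : ℕ} : DecidablePred
    (fun p : Equiv.Perm (Fin n) × Equiv.Perm (Fin n) => CommonAscent p.1 p.2) := fun _ => by
  unfold CommonAscent; infer_instance

/-- The number of inversions of a permutation. -/
def inversions {n : ℕ} (σ : Equiv.Perm (Fin n)) : ℕ :=
  (Finset.univ.filter (fun p : Fin n × Fin n => p.1 < p.2 ∧ σ p.2 < σ p.1)).card

/-- `W n = ∑ q^(inv σ + inv τ)` over pairs of permutations with no common ascent,
as a polynomial in `q`. -/
noncomputable def W (n : ℕ) : Polynomial ℚ :=
  ∑ p ∈ Finset.univ.filter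
      (fun p : Equiv.Perm (Fin n) × Equiv.Perm (Fin n) => ¬ CommonAscent p.1 p.2),
    Polynomial.X ^ (inversions p.1 + inversions p.2)

/-- The `q`-analogue `[i]_q = 1 + q + ... + q^{i-1}` as a polynomial. -/
noncomputable def qInt (i : ℕ) : Polynomial ℚ := ∑ j ∈ Finset.range i, Polynomial.X ^ j

/-- The `q`-factorial `[n]_q! = ∏_{i=1}^n [i]_q`. -/
noncomputable def qFact (n : ℕ) : Polynomial ℚ := ∏ i ∈ Finset.range n, qInt (i + 1)

/-- The Gaussian binomial coefficient `[n choose i]_q = [n]_q!/([i]_q![n-i]_q!)`,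
as a rational function in `q`. -/
noncomputable def qBinom (n i : ℕ) : RatFunc ℚ :=
  algebraMap (Polynomial ℚ) (RatFunc ℚ) (qFact n) /
    (algebraMap (Polynomial ℚ) (RatFunc ℚ) (qFact i) *
      algebraMap (Polynomial ℚ) (RatFunc ℚ) (qFact (n - i)))

-- ===== auxiliary development =====
open Equiv Polynomial

/-- tail of σ (positions ≥ m) is increasing at adjacent places -/
def Incr {n : ℕ} (m : ℕ) (σ : Perm (Fin n)) : Prop :=
  ∀ i j : Fin n, (i:ℕ) + 1 = (j:ℕ) → m ≤ (i:ℕ) → σ i < σ j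

instance {n m : ℕ} : DecidablePred (Incr (n := n) m) := fun _ => by
  unfold Incr; infer_instance

/-- no common ascent at pairs (i,j) with j < a -/
def NoCA {n : ℕ} (a : ℕ) (σ τ : Perm (Fin n)) : Prop :=
  ∀ i j : Fin n, (i:ℕ)+1 = (j:ℕ) → (j:ℕ) < a → ¬(σ i < σ j ∧ τ i < τ j)

instance {n a : ℕ} {σ τ : Perm (Fin n)} : Decidable (NoCA a σ τ) := by
  unfold NoCA; infer_instance

noncomputable def ff (n a b : ℕ) : Polynomial ℚ :=
  ∑ p ∈ univ.filter (fun p : Perm (Fin n) × Perm (Fin n) =>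
      NoCA a p.1 p.2 ∧ Incr b p.1 ∧ Incr b p.2),
    X ^ (inversions p.1 + inversions p.2)

def wS {n : ℕ} (S : Finset (Fin n)) : ℕ :=
  (univ.filter (fun p : Fin n × Fin n => p.1 ∈ S ∧ p.2 ∉ S ∧ p.2 < p.1)).card

noncomputable def phi (n m : ℕ) : Polynomial ℚ :=
  ∑ S ∈ powersetCard m (univ : Finset (Fin n)), X ^ wS S

lemma card_compl_eq {n m : ℕ} {S : Finset (Fin n)} (hS : S.card = m) : Sᶜ.card = n - m := by
  simp [Finset.card_compl, hS]

def decodeFun {n : ℕ} (m : ℕ) (hm : m ≤ n) (π : Perm (Fin m)) (ρ : Perm (Fin (n-m)))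
    (S : Finset (Fin n)) (hS : S.card = m) : Fin n → Fin n := fun p =>
  if h : (p:ℕ) < m then (S.orderIsoOfFin hS (π ⟨p, by omega⟩) : Fin n)
  else (Sᶜ.orderIsoOfFin (card_compl_eq hS) (ρ ⟨(p:ℕ) - m, by omega⟩) : Fin n)

lemma decodeFun_inj {n m : ℕ} (hm : m ≤ n) (π : Perm (Fin m)) (ρ : Perm (Fin (n-m)))
    (S : Finset (Fin n)) (hS : S.card = m) :
    Function.Injective (decodeFun m hm π ρ S hS) := by
  intro p q hpq
  unfold decodeFun at hpq
  by_cases hp : (p:ℕ) < m <;> by_cases hq : (q:ℕ) < m <;>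
    simp only [dif_pos, dif_neg, hp, hq] at hpq
  · have := Subtype.coe_injective hpq
    have := (S.orderIsoOfFin hS).injective this
    have := π.injective this
    exact Fin.ext (by simpa [Fin.ext_iff] using this)
  · exfalso
    have h1 : (S.orderIsoOfFin hS (π ⟨p, by omega⟩) : Fin n) ∈ S :=
      (S.orderIsoOfFin hS (π ⟨p, by omega⟩)).2
    have h2 : ((Sᶜ.orderIsoOfFin (card_compl_eq hS) (ρ ⟨(q:ℕ) - m, by omega⟩)) : Fin n) ∈ Sᶜ :=
      ((Sᶜ.orderIsoOfFin (card_compl_eq hS) (ρ ⟨(q:ℕ) - m, by omega⟩))).2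
    rw [hpq] at h1
    rw [Finset.mem_compl] at h2
    exact h2 h1
  · exfalso
    have h1 : (S.orderIsoOfFin hS (π ⟨q, by omega⟩) : Fin n) ∈ S :=
      (S.orderIsoOfFin hS (π ⟨q, by omega⟩)).2
    have h2 : ((Sᶜ.orderIsoOfFin (card_compl_eq hS) (ρ ⟨(p:ℕ) - m, by omega⟩)) : Fin n) ∈ Sᶜ :=
      ((Sᶜ.orderIsoOfFin (card_compl_eq hS) (ρ ⟨(p:ℕ) - m, by omega⟩))).2
    rw [← hpq] at h1
    rw [Finset.mem_compl] at h2
    exact h2 h1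
  · have := Subtype.coe_injective hpq
    have := (Sᶜ.orderIsoOfFin (card_compl_eq hS)).injective this
    have := ρ.injective this
    have : (p:ℕ) - m = (q:ℕ) - m := by simpa [Fin.ext_iff] using this
    exact Fin.ext (by omega)

noncomputable def decode {n : ℕ} (m : ℕ) (hm : m ≤ n) (π : Perm (Fin m)) (ρ : Perm (Fin (n-m)))
    (S : Finset (Fin n)) : Perm (Fin n) :=
  if hS : S.card = m then
    Equiv.ofBijective _ (Finite.injective_iff_bijective.mp (decodeFun_inj hm π ρ S hS))
  else 1

lemma decode_apply_lt {n m : ℕ} (hm : m ≤ n) (π : Perm (Fin m)) (ρ : Perm (Fin (n-m)))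
    {S : Finset (Fin n)} (hS : S.card = m) {p : Fin n} (hp : (p:ℕ) < m) :
    decode m hm π ρ S p = (S.orderIsoOfFin hS (π ⟨p, hp⟩) : Fin n) := by
  simp only [decode, dif_pos hS]
  show decodeFun m hm π ρ S hS p = _
  simp [decodeFun, hp]

lemma decode_apply_ge {n m : ℕ} (hm : m ≤ n) (π : Perm (Fin m)) (ρ : Perm (Fin (n-m)))
    {S : Finset (Fin n)} (hS : S.card = m) {p : Fin n} (hp : ¬ (p:ℕ) < m) :
    decode m hm π ρ S p =
      (Sᶜ.orderIsoOfFin (card_compl_eq hS) (ρ ⟨(p:ℕ) - m, by omega⟩) : Fin n) := by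
  simp only [decode, dif_pos hS]
  show decodeFun m hm π ρ S hS p = _
  simp [decodeFun, hp]

lemma decode_mem_head {n m : ℕ} (hm : m ≤ n) (π : Perm (Fin m)) (ρ : Perm (Fin (n-m)))
    {S : Finset (Fin n)} (hS : S.card = m) {p : Fin n} (hp : (p:ℕ) < m) :
    decode m hm π ρ S p ∈ S := by
  rw [decode_apply_lt hm π ρ hS hp]; exact (S.orderIsoOfFin hS (π ⟨p, hp⟩)).2

lemma decode_mem_tail {n m : ℕ} (hm : m ≤ n) (π : Perm (Fin m)) (ρ : Perm (Fin (n-m)))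
    {S : Finset (Fin n)} (hS : S.card = m) {p : Fin n} (hp : ¬ (p:ℕ) < m) :
    decode m hm π ρ S p ∉ S := by
  rw [decode_apply_ge hm π ρ hS hp]
  have := (Sᶜ.orderIsoOfFin (card_compl_eq hS) (ρ ⟨(p:ℕ) - m, by omega⟩)).2
  rwa [Finset.mem_compl] at this

lemma decode_lt_head {n m : ℕ} (hm : m ≤ n) (π : Perm (Fin m)) (ρ : Perm (Fin (n-m)))
    {S : Finset (Fin n)} (hS : S.card = m) {p q : Fin n} (hp : (p:ℕ) < m) (hq : (q:ℕ) < m) :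
    decode m hm π ρ S p < decode m hm π ρ S q ↔ π ⟨p, hp⟩ < π ⟨q, hq⟩ := by
  rw [decode_apply_lt hm π ρ hS hp, decode_apply_lt hm π ρ hS hq]
  rw [show ((S.orderIsoOfFin hS (π ⟨p, hp⟩) : Fin n) < (S.orderIsoOfFin hS (π ⟨q, hq⟩) : Fin n)) ↔
      S.orderIsoOfFin hS (π ⟨p, hp⟩) < S.orderIsoOfFin hS (π ⟨q, hq⟩) from Subtype.coe_lt_coe,
    OrderIso.lt_iff_lt]

lemma decode_lt_tail {n m : ℕ} (hm : m ≤ n) (π : Perm (Fin m)) (ρ : Perm (Fin (n-m)))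
    {S : Finset (Fin n)} (hS : S.card = m) {p q : Fin n} (hp : ¬(p:ℕ) < m) (hq : ¬(q:ℕ) < m) :
    decode m hm π ρ S p < decode m hm π ρ S q ↔
      ρ ⟨(p:ℕ) - m, by omega⟩ < ρ ⟨(q:ℕ) - m, by omega⟩ := by
  rw [decode_apply_ge hm π ρ hS hp, decode_apply_ge hm π ρ hS hq]
  rw [show ∀ a b : (Sᶜ : Finset (Fin n)), ((a : Fin n) < (b : Fin n)) ↔ a < b from
      fun a b => Subtype.coe_lt_coe, OrderIso.lt_iff_lt]
lemma inversions_decode {n m : ℕ} (hm : m ≤ n) (π : Perm (Fin m)) (ρ : Perm (Fin (n-m)))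
    {S : Finset (Fin n)} (hS : S.card = m) :
    inversions (decode m hm π ρ S) = inversions π + inversions ρ + wS S := by
  set σ := decode m hm π ρ S with hσ
  have hsplit : (univ.filter (fun p : Fin n × Fin n => p.1 < p.2 ∧ σ p.2 < σ p.1))
      = (univ.filter (fun p : Fin n × Fin n => (p.1 < p.2 ∧ σ p.2 < σ p.1) ∧ (p.2:ℕ) < m))
      ∪ ((univ.filter (fun p : Fin n × Fin n =>
            (p.1 < p.2 ∧ σ p.2 < σ p.1) ∧ ¬(p.2:ℕ) < m ∧ ¬(p.1:ℕ) < m))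
      ∪ (univ.filter (fun p : Fin n × Fin n =>
            (p.1 < p.2 ∧ σ p.2 < σ p.1) ∧ ¬(p.2:ℕ) < m ∧ (p.1:ℕ) < m))) := by
    ext p; simp only [Finset.mem_filter, Finset.mem_union, Finset.mem_univ, true_and]; tauto
  have hd1 : Disjoint
      (univ.filter (fun p : Fin n × Fin n => (p.1 < p.2 ∧ σ p.2 < σ p.1) ∧ (p.2:ℕ) < m))
      ((univ.filter (fun p : Fin n × Fin n =>
            (p.1 < p.2 ∧ σ p.2 < σ p.1) ∧ ¬(p.2:ℕ) < m ∧ ¬(p.1:ℕ) < m))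
      ∪ (univ.filter (fun p : Fin n × Fin n =>
            (p.1 < p.2 ∧ σ p.2 < σ p.1) ∧ ¬(p.2:ℕ) < m ∧ (p.1:ℕ) < m))) := by
    rw [Finset.disjoint_left]
    intro p hp hp'
    simp only [Finset.mem_filter, Finset.mem_union, Finset.mem_univ, true_and] at hp hp'
    tauto
  have hd2 : Disjoint
      (univ.filter (fun p : Fin n × Fin n =>
            (p.1 < p.2 ∧ σ p.2 < σ p.1) ∧ ¬(p.2:ℕ) < m ∧ ¬(p.1:ℕ) < m))
      (univ.filter (fun p : Fin n × Fin n =>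
            (p.1 < p.2 ∧ σ p.2 < σ p.1) ∧ ¬(p.2:ℕ) < m ∧ (p.1:ℕ) < m)) := by
    rw [Finset.disjoint_left]
    intro p hp hp'
    simp only [Finset.mem_filter, Finset.mem_univ, true_and] at hp hp'
    tauto
  have cardA : (univ.filter (fun p : Fin n × Fin n =>
      (p.1 < p.2 ∧ σ p.2 < σ p.1) ∧ (p.2:ℕ) < m)).card = inversions π := by
    unfold inversions
    apply Finset.card_bij (fun p hp =>
      ((⟨(p.1:ℕ), by
          simp only [Finset.mem_filter, Finset.mem_univ, true_and] at hp
          have := hp.1.1; have := hp.2; omega⟩ : Fin m),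
       (⟨(p.2:ℕ), by
          simp only [Finset.mem_filter, Finset.mem_univ, true_and] at hp
          exact hp.2⟩ : Fin m)))
    · intro p hp
      simp only [Finset.mem_filter, Finset.mem_univ, true_and] at hp ⊢
      obtain ⟨⟨h12, hinv⟩, h2m⟩ := hp
      have h1m : (p.1:ℕ) < m := by have := Fin.lt_def.mp h12; omega
      constructor
      · exact Fin.lt_def.mpr (by simpa using Fin.lt_def.mp h12)
      · exact (decode_lt_head hm π ρ hS h2m h1m).mp hinv
    · intro p hp q hq h
      have h1 : ((p.1:ℕ)) = ((q.1:ℕ)) := congrArg (fun x : Fin m × Fin m => (x.1 : ℕ)) h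
      have h2 : ((p.2:ℕ)) = ((q.2:ℕ)) := congrArg (fun x : Fin m × Fin m => (x.2 : ℕ)) h
      exact Prod.ext (Fin.ext h1) (Fin.ext h2)
    · intro b hb
      simp only [Finset.mem_filter, Finset.mem_univ, true_and] at hb
      obtain ⟨h12, hinv⟩ := hb
      refine ⟨(⟨(b.1:ℕ), by omega⟩, ⟨(b.2:ℕ), by omega⟩), ?_, ?_⟩
      · simp only [Finset.mem_filter, Finset.mem_univ, true_and]
        refine ⟨⟨Fin.lt_def.mpr (by simpa using Fin.lt_def.mp h12), ?_⟩, b.2.2⟩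
        exact (decode_lt_head hm π ρ hS b.2.2 b.1.2).mpr hinv
      · exact Prod.ext (Fin.ext rfl) (Fin.ext rfl)
  have cardC : (univ.filter (fun p : Fin n × Fin n =>
      (p.1 < p.2 ∧ σ p.2 < σ p.1) ∧ ¬(p.2:ℕ) < m ∧ ¬(p.1:ℕ) < m)).card = inversions ρ := by
    unfold inversions
    apply Finset.card_bij (fun p hp =>
      ((⟨(p.1:ℕ) - m, by
          simp only [Finset.mem_filter, Finset.mem_univ, true_and] at hp
          have := p.1.2; have := hp.2.2; omega⟩ : Fin (n - m)),
       (⟨(p.2:ℕ) - m, by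
          simp only [Finset.mem_filter, Finset.mem_univ, true_and] at hp
          have := p.2.2; have := hp.2.1; omega⟩ : Fin (n - m))))
    · intro p hp
      simp only [Finset.mem_filter, Finset.mem_univ, true_and] at hp ⊢
      obtain ⟨⟨h12, hinv⟩, h2m, h1m⟩ := hp
      constructor
      · exact Fin.lt_def.mpr (by have := Fin.lt_def.mp h12; simp; omega)
      · exact (decode_lt_tail hm π ρ hS h2m h1m).mp hinv
    · intro p hp q hq h
      simp only [Finset.mem_filter, Finset.mem_univ, true_and] at hp hq
      have h1 : ((p.1:ℕ) - m) = ((q.1:ℕ) - m) :=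
        congrArg (fun x : Fin (n-m) × Fin (n-m) => (x.1 : ℕ)) h
      have h2 : ((p.2:ℕ) - m) = ((q.2:ℕ) - m) :=
        congrArg (fun x : Fin (n-m) × Fin (n-m) => (x.2 : ℕ)) h
      have := hp.2.1; have := hp.2.2; have := hq.2.1; have := hq.2.2
      exact Prod.ext (Fin.ext (by omega)) (Fin.ext (by omega))
    · intro b hb
      simp only [Finset.mem_filter, Finset.mem_univ, true_and] at hb
      obtain ⟨h12, hinv⟩ := hb
      have hb1 : (b.1:ℕ) < n - m := b.1.2
      have hb2 : (b.2:ℕ) < n - m := b.2.2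
      refine ⟨(⟨m + (b.1:ℕ), by omega⟩, ⟨m + (b.2:ℕ), by omega⟩), ?_, ?_⟩
      · simp only [Finset.mem_filter, Finset.mem_univ, true_and]
        have h1 : ¬ (m + (b.1:ℕ) < m) := by omega
        have h2 : ¬ (m + (b.2:ℕ) < m) := by omega
        refine ⟨⟨Fin.lt_def.mpr (by simp; have := Fin.lt_def.mp h12; omega), ?_⟩, h2, h1⟩
        exact (decode_lt_tail hm π ρ hS h2 h1).mpr (by
          convert hinv <;> exact Nat.add_sub_cancel_left m _)
      · exact Prod.ext (Fin.ext (Nat.add_sub_cancel_left m _))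
          (Fin.ext (Nat.add_sub_cancel_left m _))
  have cardB : (univ.filter (fun p : Fin n × Fin n =>
      (p.1 < p.2 ∧ σ p.2 < σ p.1) ∧ ¬(p.2:ℕ) < m ∧ (p.1:ℕ) < m)).card = wS S := by
    unfold wS
    apply Finset.card_bij (fun p _ => (σ p.1, σ p.2))
    · intro p hp
      simp only [Finset.mem_filter, Finset.mem_univ, true_and] at hp ⊢
      obtain ⟨⟨h12, hinv⟩, h2m, h1m⟩ := hp
      exact ⟨decode_mem_head hm π ρ hS h1m, decode_mem_tail hm π ρ hS h2m, hinv⟩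
    · intro p hp q hq h
      simp only [Prod.ext_iff] at h ⊢
      exact ⟨σ.injective h.1, σ.injective h.2⟩
    · intro b hb
      simp only [Finset.mem_filter, Finset.mem_univ, true_and] at hb
      obtain ⟨hbS, hbT, hlt⟩ := hb
      have h1m : (↑(σ.symm b.1) : ℕ) < m := by
        by_contra h
        exact (decode_mem_tail hm π ρ hS h) (by rw [hσ] at *; rw [Equiv.apply_symm_apply]; exact hbS)
      have h2m : ¬ (↑(σ.symm b.2) : ℕ) < m := by
        intro h
        exact hbT (by
          have := decode_mem_head hm π ρ hS (p := σ.symm b.2) h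
          rwa [← hσ, Equiv.apply_symm_apply] at this)
      refine ⟨(σ.symm b.1, σ.symm b.2), ?_, ?_⟩
      · simp only [Finset.mem_filter, Finset.mem_univ, true_and]
        refine ⟨⟨Fin.lt_def.mpr (by omega), ?_⟩, h2m, h1m⟩
        rw [Equiv.apply_symm_apply, Equiv.apply_symm_apply]; exact hlt
      · simp [Equiv.apply_symm_apply]
  show (univ.filter (fun p : Fin n × Fin n => p.1 < p.2 ∧ σ p.2 < σ p.1)).card = _
  rw [hsplit, Finset.card_union_of_disjoint hd1, Finset.card_union_of_disjoint hd2,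
    cardA, cardB, cardC]
  omega

lemma card_head_filter {n : ℕ} (m : ℕ) (hm : m ≤ n) :
    ((univ : Finset (Fin n)).filter (fun p : Fin n => (p:ℕ) < m)).card = m := by
  have : ((univ : Finset (Fin n)).filter (fun p : Fin n => (p:ℕ) < m))
      = Finset.map (Fin.castLEEmb hm) univ := by
    ext p
    simp only [Finset.mem_filter, Finset.mem_univ, true_and, Finset.mem_map]
    constructor
    · intro h
      exact ⟨⟨(p:ℕ), h⟩, Fin.ext rfl⟩
    · rintro ⟨a, -, rfl⟩
      simpa using a.2
  rw [this, Finset.card_map, Finset.card_univ, Fintype.card_fin]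

lemma decode_surj {n m : ℕ} (hm : m ≤ n) (σ : Perm (Fin n)) :
    ∃ (π : Perm (Fin m)) (ρ : Perm (Fin (n-m))) (S : Finset (Fin n)),
      S.card = m ∧ decode m hm π ρ S = σ := by
  set S : Finset (Fin n) := (univ.filter (fun p : Fin n => (p:ℕ) < m)).image σ with hSdef
  have hS : S.card = m := by
    rw [hSdef, Finset.card_image_of_injective _ σ.injective]
    exact card_head_filter m hm
  have memS : ∀ p : Fin n, (p:ℕ) < m → σ p ∈ S := by
    intro p hp
    rw [hSdef]
    exact Finset.mem_image_of_mem _ (by simp [hp])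
  have memSc : ∀ p : Fin n, ¬ (p:ℕ) < m → σ p ∈ Sᶜ := by
    intro p hp
    rw [Finset.mem_compl, hSdef]
    intro hmem
    obtain ⟨q, hq, hq2⟩ := Finset.mem_image.mp hmem
    simp only [Finset.mem_filter, Finset.mem_univ, true_and] at hq
    exact hp (σ.injective hq2 ▸ hq)
  have hπinj : Function.Injective (fun i : Fin m =>
      (S.orderIsoOfFin hS).symm ⟨σ ⟨(i:ℕ), by omega⟩, memS _ i.2⟩) := by
    intro i j h
    have := (S.orderIsoOfFin hS).symm.injective h
    have := Subtype.ext_iff.mp this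
    have := σ.injective this
    exact Fin.ext (congrArg (fun x : Fin n => (x:ℕ)) this)
  have hρinj : Function.Injective (fun k : Fin (n-m) =>
      (Sᶜ.orderIsoOfFin (card_compl_eq hS)).symm
        ⟨σ ⟨m + (k:ℕ), by omega⟩, memSc _ (by show ¬ (m + (k:ℕ) < m); omega)⟩) := by
    intro i j h
    have := (Sᶜ.orderIsoOfFin (card_compl_eq hS)).symm.injective h
    have := Subtype.ext_iff.mp this
    have := σ.injective this
    have := congrArg (fun x : Fin n => (x:ℕ)) this
    simp only at this
    exact Fin.ext (by omega)
  refine ⟨Equiv.ofBijective _ (Finite.injective_iff_bijective.mp hπinj),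
    Equiv.ofBijective _ (Finite.injective_iff_bijective.mp hρinj), S, hS, ?_⟩
  apply Equiv.ext
  intro p
  by_cases h : (p:ℕ) < m
  · rw [decode_apply_lt hm _ _ hS h]
    show ((S.orderIsoOfFin hS) ((S.orderIsoOfFin hS).symm ⟨σ ⟨(p:ℕ), _⟩, _⟩) : Fin n) = σ p
    rw [OrderIso.apply_symm_apply]
  · rw [decode_apply_ge hm _ _ hS h]
    show ((Sᶜ.orderIsoOfFin (card_compl_eq hS))
      ((Sᶜ.orderIsoOfFin (card_compl_eq hS)).symm ⟨σ ⟨m + ((p:ℕ) - m), _⟩, _⟩) : Fin n) = σ p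
    rw [OrderIso.apply_symm_apply]
    show σ ⟨m + ((p:ℕ) - m), by omega⟩ = σ p
    exact congrArg σ (Fin.ext (by show m + ((p:ℕ) - m) = (p:ℕ); omega))

lemma decode_headSet {n m : ℕ} (hm : m ≤ n) (π : Perm (Fin m)) (ρ : Perm (Fin (n-m)))
    {S : Finset (Fin n)} (hS : S.card = m) :
    (univ.filter (fun p : Fin n => (p:ℕ) < m)).image (decode m hm π ρ S) = S := by
  apply Finset.eq_of_subset_of_card_le
  · intro x hx
    obtain ⟨p, hp, hp2⟩ := Finset.mem_image.mp hx
    simp only [Finset.mem_filter, Finset.mem_univ, true_and] at hp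
    exact hp2 ▸ decode_mem_head hm π ρ hS hp
  · rw [hS, Finset.card_image_of_injective _ (decode m hm π ρ S).injective,
      card_head_filter m hm]

lemma decode_inj {n m : ℕ} (hm : m ≤ n) {π π' : Perm (Fin m)} {ρ ρ' : Perm (Fin (n-m))}
    {S S' : Finset (Fin n)} (hS : S.card = m) (hS' : S'.card = m)
    (h : decode m hm π ρ S = decode m hm π' ρ' S') : π = π' ∧ ρ = ρ' ∧ S = S' := by
  have hSS : S = S' := by
    rw [← decode_headSet hm π ρ hS, ← decode_headSet hm π' ρ' hS', h]
  subst hSS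
  refine ⟨?_, ?_, rfl⟩
  · apply Equiv.ext
    intro i
    have hp : ((⟨(i:ℕ), by omega⟩ : Fin n) : ℕ) < m := i.2
    have e1 := decode_apply_lt hm π ρ hS hp
    have e2 := decode_apply_lt hm π' ρ' hS' hp
    rw [h] at e1
    rw [e2] at e1
    have := (S.orderIsoOfFin _).injective (Subtype.coe_injective e1.symm)
    convert this using 2 <;> exact (Fin.ext rfl)
  · apply Equiv.ext
    intro k
    have hk : (k:ℕ) < n - m := k.2
    have hp : ¬ ((⟨m + (k:ℕ), by omega⟩ : Fin n) : ℕ) < m := by simp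
    have e1 := decode_apply_ge hm π ρ hS hp
    have e2 := decode_apply_ge hm π' ρ' hS' hp
    rw [h] at e1
    rw [e2] at e1
    have := (Sᶜ.orderIsoOfFin _).injective (Subtype.coe_injective e1.symm)
    convert this using 2 <;> exact (Fin.ext (by simp))

lemma master_sum {n m : ℕ} (hm : m ≤ n) (F : Perm (Fin n) → Polynomial ℚ) :
    ∑ σ : Perm (Fin n), F σ =
      ∑ x ∈ ((univ : Finset (Perm (Fin m) × Perm (Fin (n-m)))) ×ˢ
          powersetCard m (univ : Finset (Fin n))),
        F (decode m hm x.1.1 x.1.2 x.2) := by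
  symm
  apply Finset.sum_bij (fun x _ => decode m hm x.1.1 x.1.2 x.2)
  · intro a ha; exact mem_univ _
  · intro a ha b hb h
    have hSa : a.2.card = m := Finset.mem_powersetCard_univ.mp (Finset.mem_product.mp ha).2
    have hSb : b.2.card = m := Finset.mem_powersetCard_univ.mp (Finset.mem_product.mp hb).2
    obtain ⟨h1, h2, h3⟩ := decode_inj hm hSa hSb h
    exact Prod.ext (Prod.ext h1 h2) h3
  · intro σ _
    obtain ⟨π, ρ, S, hS, hdec⟩ := decode_surj hm σ
    exact ⟨((π, ρ), S), Finset.mem_product.mpr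
      ⟨mem_univ _, Finset.mem_powersetCard_univ.mpr hS⟩, hdec⟩
  · intros; rfl

lemma inversions_small {k : ℕ} (hk : k ≤ 1) (ρ : Perm (Fin k)) : inversions ρ = 0 := by
  unfold inversions
  rw [Finset.card_eq_zero]
  ext p
  simp only [Finset.mem_filter, Finset.mem_univ, true_and, Finset.notMem_empty, iff_false]
  rintro ⟨h1, -⟩
  have := p.1.2; have := p.2.2
  have := Fin.lt_def.mp h1
  omega

lemma card_filter_gt {n : ℕ} (b : Fin n) :
    ((univ : Finset (Fin n)).filter (fun a : Fin n => b < a)).card = n - 1 - (b:ℕ) := by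
  have hsum := Finset.card_filter_add_card_filter_not
    (s := (univ : Finset (Fin n))) (p := fun a : Fin n => b < a)
  have hneg : ((univ : Finset (Fin n)).filter (fun a : Fin n => ¬ b < a))
      = (univ : Finset (Fin n)).filter (fun a : Fin n => (a:ℕ) < (b:ℕ)+1) := by
    apply Finset.filter_congr
    intro a _
    simp only [not_lt, Fin.le_def, Fin.lt_def]
    constructor <;> intro h <;> omega
  rw [hneg, card_head_filter ((b:ℕ)+1) b.2] at hsum
  have := b.2
  simp only [Finset.card_univ, Fintype.card_fin] at hsum
  omega

lemma wS_erase {n : ℕ} (b : Fin n) :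
    wS ((univ : Finset (Fin n)).erase b) = n - 1 - (b:ℕ) := by
  unfold wS
  rw [← card_filter_gt b]
  apply Finset.card_bij (fun p _ => p.1)
  · intro p hp
    simp only [Finset.mem_filter, Finset.mem_univ, true_and] at hp ⊢
    have hp2 : p.2 = b := by
      by_contra h
      exact hp.2.1 (Finset.mem_erase.mpr ⟨h, mem_univ _⟩)
    rw [hp2] at hp
    exact hp.2.2
  · intro p hp q hq h
    simp only [Finset.mem_filter, Finset.mem_univ, true_and] at hp hq
    have hp2 : p.2 = b := by
      by_contra hc
      exact hp.2.1 (Finset.mem_erase.mpr ⟨hc, mem_univ _⟩)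
    have hq2 : q.2 = b := by
      by_contra hc
      exact hq.2.1 (Finset.mem_erase.mpr ⟨hc, mem_univ _⟩)
    exact Prod.ext h (hp2.trans hq2.symm)
  · intro a ha
    simp only [Finset.mem_filter, Finset.mem_univ, true_and] at ha
    refine ⟨(a, b), ?_, rfl⟩
    simp only [Finset.mem_filter, Finset.mem_univ, true_and]
    refine ⟨Finset.mem_erase.mpr ⟨ne_of_gt ha, mem_univ _⟩, ?_, ha⟩
    intro h
    exact absurd (Finset.mem_erase.mp h).1 (by simp)

lemma phi_top (n : ℕ) : phi (n+1) n = qInt (n+1) := by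
  unfold phi qInt
  have step1 : ∑ S ∈ powersetCard n (univ : Finset (Fin (n+1))), (X:Polynomial ℚ) ^ wS S
      = ∑ b : Fin (n+1), (X:Polynomial ℚ) ^ (n - (b:ℕ)) := by
    symm
    apply Finset.sum_bij (fun b _ => (univ : Finset (Fin (n+1))).erase b)
    · intro b _
      rw [Finset.mem_powersetCard_univ, Finset.card_erase_of_mem (mem_univ _)]
      simp
    · intro a _ b _ h
      by_contra hab
      have : a ∈ (univ : Finset (Fin (n+1))).erase b := by
        simp [Finset.mem_erase, hab]
      rw [← h] at this
      simp [Finset.mem_erase] at this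
    · intro S hS
      rw [Finset.mem_powersetCard_univ] at hS
      have hc : Sᶜ.card = 1 := by
        rw [Finset.card_compl, hS]; simp
      obtain ⟨b, hb⟩ := Finset.card_eq_one.mp hc
      refine ⟨b, mem_univ _, ?_⟩
      ext x
      simp only [Finset.mem_erase, Finset.mem_univ, and_true]
      constructor
      · intro hx
        by_contra hmem
        have : x ∈ Sᶜ := by rwa [Finset.mem_compl]
        rw [hb, Finset.mem_singleton] at this
        exact hx this
      · intro hx
        by_contra hmem
        have : x ∈ Sᶜ := by rw [hb, Finset.mem_singleton]; exact hmem
        rw [Finset.mem_compl] at this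
        exact this hx
    · intro b _
      rw [wS_erase b]
      norm_num
  rw [step1]
  refine Finset.sum_bij (fun (b : Fin (n+1)) (_ : b ∈ univ) => n - (b:ℕ)) ?_ ?_ ?_ ?_
  · intro b _
    show n - (b:ℕ) ∈ Finset.range (n+1)
    rw [Finset.mem_range]
    omega
  · intro a _ b _ h
    have h' : n - (a:ℕ) = n - (b:ℕ) := h
    have := a.2; have := b.2
    exact Fin.ext (by omega)
  · intro j hj
    rw [Finset.mem_range] at hj
    refine ⟨⟨n - j, by omega⟩, mem_univ _, ?_⟩
    show n - (n - j) = j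
    omega
  · intro b _; rfl

lemma sum_pow_inv_eq (n m : ℕ) (hm : m ≤ n) :
    ∑ σ : Perm (Fin n), (X:Polynomial ℚ) ^ inversions σ
      = (∑ π : Perm (Fin m), (X:Polynomial ℚ) ^ inversions π)
        * (∑ ρ : Perm (Fin (n-m)), (X:Polynomial ℚ) ^ inversions ρ) * phi n m := by
  rw [master_sum hm, Finset.sum_product]
  have step1 : ∀ y : Perm (Fin m) × Perm (Fin (n-m)),
      ∑ S ∈ powersetCard m (univ : Finset (Fin n)),
        (X:Polynomial ℚ) ^ inversions (decode m hm y.1 y.2 S)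
      = (X:Polynomial ℚ) ^ inversions y.1 * (X:Polynomial ℚ) ^ inversions y.2 * phi n m := by
    intro y
    unfold phi
    rw [Finset.mul_sum]
    apply Finset.sum_congr rfl
    intro S hS
    rw [inversions_decode hm y.1 y.2 (Finset.mem_powersetCard_univ.mp hS), pow_add, pow_add]
  calc ∑ y : Perm (Fin m) × Perm (Fin (n-m)),
        ∑ S ∈ powersetCard m (univ : Finset (Fin n)),
          (X:Polynomial ℚ) ^ inversions (decode m hm y.1 y.2 S)
      = ∑ y : Perm (Fin m) × Perm (Fin (n-m)),
          (X:Polynomial ℚ) ^ inversions y.1 * (X:Polynomial ℚ) ^ inversions y.2 * phi n m := by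
        exact Finset.sum_congr rfl (fun y _ => step1 y)
    _ = (∑ y : Perm (Fin m) × Perm (Fin (n-m)),
          (X:Polynomial ℚ) ^ inversions y.1 * (X:Polynomial ℚ) ^ inversions y.2) * phi n m := by
        rw [Finset.sum_mul]
    _ = _ := by
        rw [Finset.sum_mul_sum]
        rw [Fintype.sum_prod_type]

lemma qFact_eq : ∀ n : ℕ, ∑ σ : Perm (Fin n), (X:Polynomial ℚ) ^ inversions σ = qFact n := by
  intro n
  induction n with
  | zero =>
    rw [Finset.sum_congr rfl (fun σ _ => by rw [inversions_small (by omega) σ, pow_zero])]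
    simp [qFact, Finset.card_univ, Fintype.card_perm]
  | succ n ih =>
    rw [sum_pow_inv_eq (n+1) n (by omega), ih, phi_top]
    have h2 : ∑ ρ : Perm (Fin (n+1-n)), (X:Polynomial ℚ) ^ inversions ρ = 1 := by
      rw [Finset.sum_congr rfl (fun ρ _ => by rw [inversions_small (by omega) ρ, pow_zero])]
      have : n + 1 - n = 1 := by omega
      simp [Finset.card_univ, Fintype.card_perm, this]
    rw [h2, mul_one]
    unfold qFact
    rw [Finset.prod_range_succ]
lemma phi_mul {n m : ℕ} (hm : m ≤ n) : qFact m * qFact (n-m) * phi n m = qFact n := by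
  rw [← qFact_eq n, sum_pow_inv_eq n m hm, qFact_eq, qFact_eq]

lemma inversions_one {k : ℕ} : inversions (1 : Perm (Fin k)) = 0 := by
  unfold inversions
  rw [Finset.card_eq_zero]
  ext p
  simp only [Finset.mem_filter, Finset.mem_univ, true_and, Finset.notMem_empty, iff_false,
    Equiv.Perm.one_apply]
  intro hp; obtain ⟨-, h1, h2⟩ := Finset.mem_filter.mp hp
  exact absurd h1 (not_lt.mpr (le_of_lt h2))

lemma le_apply_of_strictMono {k : ℕ} (f : Fin k → Fin k) (h : StrictMono f) (i : Fin k) :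
    i ≤ f i := by
  have key : ∀ v : ℕ, ∀ i : Fin k, (i:ℕ) = v → i ≤ f i := by
    intro v
    induction v using Nat.strong_induction_on with
    | _ v ih =>
      intro i hi
      by_contra hc
      push_neg at hc
      have h1 : f i ≤ f (f i) :=
        ih ((f i : ℕ)) (by rw [← hi]; exact Fin.lt_def.mp hc) (f i) rfl
      have h2 : f (f i) < f i := h hc
      exact absurd (lt_of_le_of_lt h1 h2) (lt_irrefl _)
  exact key (i:ℕ) i rfl

lemma perm_eq_one_of_strictMono {k : ℕ} (ρ : Perm (Fin k))
    (h : StrictMono (ρ : Fin k → Fin k)) : ρ = 1 := by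
  have h2 : StrictMono (ρ.symm : Fin k → Fin k) := by
    intro a b hab
    rcases lt_trichotomy (ρ.symm a) (ρ.symm b) with hc | hc | hc
    · exact hc
    · exact absurd (by rw [← ρ.apply_symm_apply a, ← ρ.apply_symm_apply b, hc]) (ne_of_lt hab)
    · have := h hc
      rw [ρ.apply_symm_apply, ρ.apply_symm_apply] at this
      exact absurd hab (not_lt.mpr (le_of_lt this))
  apply Equiv.ext
  intro i
  have h1 : i ≤ ρ i := le_apply_of_strictMono _ h i
  have h3 : ρ i ≤ i := by
    have := le_apply_of_strictMono _ h2 (ρ i)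
    rwa [ρ.symm_apply_apply] at this
  exact le_antisymm h3 h1

lemma strictMono_of_adj {k : ℕ} (f : Fin k → Fin k)
    (h : ∀ i j : Fin k, (i:ℕ)+1 = (j:ℕ) → f i < f j) : StrictMono f := by
  intro a b hab
  have key : ∀ d : ℕ, ∀ b : Fin k, (b:ℕ) = (a:ℕ) + d + 1 → f a < f b := by
    intro d
    induction d with
    | zero => intro b hb; exact h a b (by omega)
    | succ d ih =>
      intro b hb
      have hmid : ((a:ℕ) + d + 1) < k := by have := b.2; omega
      refine lt_trans (ih ⟨(a:ℕ)+d+1, hmid⟩ rfl) (h _ b ?_)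
      show (a:ℕ) + d + 1 + 1 = (b:ℕ)
      omega
  have hab' := hab
  rw [Fin.lt_def] at hab'
  exact key ((b:ℕ) - (a:ℕ) - 1) b (by omega)

lemma incr_decode_iff {n m : ℕ} (hm : m ≤ n) (π : Perm (Fin m)) (ρ : Perm (Fin (n-m)))
    {S : Finset (Fin n)} (hS : S.card = m) :
    Incr m (decode m hm π ρ S) ↔ ρ = 1 := by
  constructor
  · intro hIncr
    apply perm_eq_one_of_strictMono
    apply strictMono_of_adj
    intro i j hij
    have hin : m + (i:ℕ) < n := by have := i.2; omega
    have hjn : m + (j:ℕ) < n := by have := j.2; omega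
    have hadj : ((⟨m+(i:ℕ), hin⟩ : Fin n):ℕ) + 1 = ((⟨m+(j:ℕ), hjn⟩ : Fin n):ℕ) := by
      show m+(i:ℕ)+1 = m+(j:ℕ); omega
    have hthis := hIncr _ _ hadj (by show m ≤ m + (i:ℕ); omega)
    rw [decode_lt_tail hm π ρ hS (p := ⟨m+(i:ℕ), hin⟩) (q := ⟨m+(j:ℕ), hjn⟩)
      (by show ¬ (m+(i:ℕ) < m); omega) (by show ¬ (m+(j:ℕ) < m); omega)] at hthis
    convert hthis using 2
    · exact Fin.ext (show (i:ℕ) = m + (i:ℕ) - m by omega)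
    · exact Fin.ext (show (j:ℕ) = m + (j:ℕ) - m by omega)
  · rintro rfl
    intro i j hij him
    have hi : ¬ (i:ℕ) < m := by omega
    have hj : ¬ (j:ℕ) < m := by omega
    rw [decode_lt_tail hm π 1 hS hi hj]
    simp only [Equiv.Perm.one_apply]
    rw [Fin.lt_def]
    show (i:ℕ) - m < (j:ℕ) - m
    omega

lemma noCA_decode_iff {n m : ℕ} (hm : m ≤ n) (π π' : Perm (Fin m)) (ρ ρ' : Perm (Fin (n-m)))
    {S T : Finset (Fin n)} (hS : S.card = m) (hT : T.card = m) :
    NoCA m (decode m hm π ρ S) (decode m hm π' ρ' T) ↔ ¬ CommonAscent π π' := by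
  constructor
  · intro hno hca
    obtain ⟨i, j, hij, h1, h2⟩ := hca
    have hi : (i:ℕ) < n := by have := i.2; omega
    have hj : (j:ℕ) < n := by have := j.2; omega
    refine hno ⟨(i:ℕ), hi⟩ ⟨(j:ℕ), hj⟩ (show (i:ℕ)+1 = (j:ℕ) from hij)
      (show (j:ℕ) < m from j.2) ⟨?_, ?_⟩
    · rw [decode_lt_head hm π ρ hS (p := ⟨(i:ℕ), hi⟩) (q := ⟨(j:ℕ), hj⟩) i.2 j.2]
      exact h1
    · rw [decode_lt_head hm π' ρ' hT (p := ⟨(i:ℕ), hi⟩) (q := ⟨(j:ℕ), hj⟩) i.2 j.2]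
      exact h2
  · rintro hnca i j hij hjm ⟨h1, h2⟩
    have him : (i:ℕ) < m := by omega
    rw [decode_lt_head hm π ρ hS him hjm] at h1
    rw [decode_lt_head hm π' ρ' hT him hjm] at h2
    exact hnca ⟨⟨(i:ℕ), him⟩, ⟨(j:ℕ), hjm⟩, (show (i:ℕ)+1 = (j:ℕ) from hij), h1, h2⟩

lemma ff_eq {n m : ℕ} (hm : m ≤ n) : ff n m m = W m * (phi n m * phi n m) := by
  have hbij : ff n m m
      = ∑ x ∈ ((univ.filter (fun p : Perm (Fin m) × Perm (Fin m) => ¬ CommonAscent p.1 p.2))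
          ×ˢ ((powersetCard m (univ : Finset (Fin n))) ×ˢ (powersetCard m (univ : Finset (Fin n))))),
        (X:Polynomial ℚ) ^ (inversions x.1.1 + wS x.2.1 + (inversions x.1.2 + wS x.2.2)) := by
    unfold ff
    symm
    apply Finset.sum_bij (fun x _ =>
      (decode m hm x.1.1 1 x.2.1, decode m hm x.1.2 1 x.2.2))
    · intro x hx
      rw [Finset.mem_product] at hx
      obtain ⟨hx1, hx2⟩ := hx
      rw [Finset.mem_product] at hx2
      have hS : x.2.1.card = m := Finset.mem_powersetCard_univ.mp hx2.1
      have hT : x.2.2.card = m := Finset.mem_powersetCard_univ.mp hx2.2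
      simp only [Finset.mem_filter, Finset.mem_univ, true_and] at hx1 ⊢
      exact ⟨(noCA_decode_iff hm x.1.1 x.1.2 1 1 hS hT).mpr hx1,
        (incr_decode_iff hm x.1.1 1 hS).mpr rfl,
        (incr_decode_iff hm x.1.2 1 hT).mpr rfl⟩
    · intro a ha b hb h
      rw [Finset.mem_product] at ha hb
      have hSa : a.2.1.card = m := Finset.mem_powersetCard_univ.mp (Finset.mem_product.mp ha.2).1
      have hTa : a.2.2.card = m := Finset.mem_powersetCard_univ.mp (Finset.mem_product.mp ha.2).2
      have hSb : b.2.1.card = m := Finset.mem_powersetCard_univ.mp (Finset.mem_product.mp hb.2).1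
      have hTb : b.2.2.card = m := Finset.mem_powersetCard_univ.mp (Finset.mem_product.mp hb.2).2
      have h1 := congrArg Prod.fst h
      have h2 := congrArg Prod.snd h
      simp only at h1 h2
      obtain ⟨e1, -, e3⟩ := decode_inj hm hSa hSb h1
      obtain ⟨e4, -, e6⟩ := decode_inj hm hTa hTb h2
      exact Prod.ext (Prod.ext e1 e4) (Prod.ext e3 e6)
    · intro p hp
      simp only [Finset.mem_filter, Finset.mem_univ, true_and] at hp
      obtain ⟨hno, hi1, hi2⟩ := hp
      obtain ⟨π, ρ, S, hS, hdec⟩ := decode_surj hm p.1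
      obtain ⟨π', ρ', T, hT, hdec'⟩ := decode_surj hm p.2
      have hρ : ρ = 1 := (incr_decode_iff hm π ρ hS).mp (hdec ▸ hi1)
      have hρ' : ρ' = 1 := (incr_decode_iff hm π' ρ' hT).mp (hdec' ▸ hi2)
      subst hρ hρ'
      have hnca : ¬ CommonAscent π π' := by
        rw [← noCA_decode_iff hm π π' 1 1 hS hT, hdec, hdec']
        exact hno
      refine ⟨((π, π'), (S, T)), ?_, ?_⟩
      · rw [Finset.mem_product]
        refine ⟨by simp only [Finset.mem_filter, Finset.mem_univ, true_and]; exact hnca, ?_⟩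
        rw [Finset.mem_product]
        exact ⟨Finset.mem_powersetCard_univ.mpr hS, Finset.mem_powersetCard_univ.mpr hT⟩
      · rw [hdec, hdec']
    · intro x hx
      rw [Finset.mem_product] at hx
      have hS : x.2.1.card = m := Finset.mem_powersetCard_univ.mp (Finset.mem_product.mp hx.2).1
      have hT : x.2.2.card = m := Finset.mem_powersetCard_univ.mp (Finset.mem_product.mp hx.2).2
      simp only
      rw [inversions_decode hm x.1.1 1 hS, inversions_decode hm x.1.2 1 hT, inversions_one]
      congr 1
  rw [hbij, Finset.sum_product]
  have inner : ∀ p : Perm (Fin m) × Perm (Fin m),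
      (∑ y ∈ ((powersetCard m (univ : Finset (Fin n))) ×ˢ (powersetCard m (univ : Finset (Fin n)))),
        (X:Polynomial ℚ) ^ (inversions p.1 + wS y.1 + (inversions p.2 + wS y.2)))
      = (X:Polynomial ℚ) ^ (inversions p.1 + inversions p.2) * (phi n m * phi n m) := by
    intro p
    rw [Finset.sum_product]
    have : ∀ S T : Finset (Fin n),
        (X:Polynomial ℚ) ^ (inversions p.1 + wS S + (inversions p.2 + wS T))
        = (X:Polynomial ℚ) ^ (inversions p.1 + inversions p.2) * ((X:Polynomial ℚ) ^ wS S * (X:Polynomial ℚ) ^ wS T) := by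
      intro S T
      rw [← pow_add, ← pow_add]
      congr 1
      omega
    calc ∑ S ∈ powersetCard m (univ : Finset (Fin n)), ∑ T ∈ powersetCard m (univ : Finset (Fin n)),
          (X:Polynomial ℚ) ^ (inversions p.1 + wS S + (inversions p.2 + wS T))
        = ∑ S ∈ powersetCard m (univ : Finset (Fin n)), ∑ T ∈ powersetCard m (univ : Finset (Fin n)),
          (X:Polynomial ℚ) ^ (inversions p.1 + inversions p.2) * ((X:Polynomial ℚ) ^ wS S * (X:Polynomial ℚ) ^ wS T) := by
          exact Finset.sum_congr rfl (fun S _ => Finset.sum_congr rfl (fun T _ => this S T))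
      _ = (X:Polynomial ℚ) ^ (inversions p.1 + inversions p.2) *
            ∑ S ∈ powersetCard m (univ : Finset (Fin n)),
              ∑ T ∈ powersetCard m (univ : Finset (Fin n)),
              ((X:Polynomial ℚ) ^ wS S * (X:Polynomial ℚ) ^ wS T) := by
          rw [Finset.mul_sum]
          exact Finset.sum_congr rfl (fun S _ => by rw [Finset.mul_sum])
      _ = (X:Polynomial ℚ) ^ (inversions p.1 + inversions p.2) * (phi n m * phi n m) := by
          unfold phi
          rw [Finset.sum_mul_sum]
  rw [Finset.sum_congr rfl (fun p _ => inner p)]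
  rw [← Finset.sum_mul]
  rfl

lemma ff_split {n k : ℕ} (hk2 : k + 2 ≤ n) :
    ff n (k+1) (k+1) = ff n (k+2) (k+1) + ff n (k+1) k := by
  classical
  have hI : k < n := by omega
  have hJ : k + 1 < n := by omega
  set I : Fin n := ⟨k, hI⟩ with hIdef
  set J : Fin n := ⟨k+1, hJ⟩ with hJdef
  unfold ff
  rw [← Finset.sum_filter_add_sum_filter_not
    (univ.filter fun p : Perm (Fin n) × Perm (Fin n) =>
      NoCA (k+1) p.1 p.2 ∧ Incr (k+1) p.1 ∧ Incr (k+1) p.2)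
    (fun p => ¬ (p.1 I < p.1 J ∧ p.2 I < p.2 J))]
  congr 1
  · rw [Finset.filter_filter]
    apply Finset.sum_congr _ (fun _ _ => rfl)
    apply Finset.filter_congr
    intro p _
    constructor
    · rintro ⟨⟨hno, hi1, hi2⟩, hnca⟩
      refine ⟨?_, hi1, hi2⟩
      intro i j hij hj hca
      by_cases hjk : (j:ℕ) < k + 1
      · exact hno i j hij hjk hca
      · have hik : i = I := Fin.ext (by show (i:ℕ) = k; omega)
        have hjk2 : j = J := Fin.ext (by show (j:ℕ) = k+1; omega)
        rw [hik, hjk2] at hca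
        exact hnca hca
    · rintro ⟨hno, hi1, hi2⟩
      refine ⟨⟨?_, hi1, hi2⟩, ?_⟩
      · intro i j hij hj hca
        exact hno i j hij (by omega) hca
      · intro hca
        exact hno I J (by show k + 1 = k + 1; rfl) (by show k+1 < k+2; omega) hca
  · rw [Finset.filter_filter]
    apply Finset.sum_congr _ (fun _ _ => rfl)
    apply Finset.filter_congr
    intro p _
    simp only [not_not]
    constructor
    · rintro ⟨⟨hno, hi1, hi2⟩, hca⟩
      refine ⟨hno, ?_, ?_⟩
      · intro i j hij hik
        by_cases hi : (i:ℕ) = k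
        · have hiI : i = I := Fin.ext hi
          have hjJ : j = J := Fin.ext (by show (j:ℕ) = k+1; omega)
          rw [hiI, hjJ]
          exact hca.1
        · exact hi1 i j hij (by omega)
      · intro i j hij hik
        by_cases hi : (i:ℕ) = k
        · have hiI : i = I := Fin.ext hi
          have hjJ : j = J := Fin.ext (by show (j:ℕ) = k+1; omega)
          rw [hiI, hjJ]
          exact hca.2
        · exact hi2 i j hij (by omega)
    · rintro ⟨hno, hi1, hi2⟩
      refine ⟨⟨hno, ?_, ?_⟩, ?_, ?_⟩
      · intro i j hij hik
        exact hi1 i j hij (by omega)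
      · intro i j hij hik
        exact hi2 i j hij (by omega)
      · exact hi1 I J rfl (by show k ≤ k; omega)
      · exact hi2 I J rfl (by show k ≤ k; omega)

lemma ff_eq_W {n a b : ℕ} (ha : n ≤ a) (hb : n ≤ b + 1) : ff n a b = W n := by
  unfold ff W
  apply Finset.sum_congr _ (fun _ _ => rfl)
  apply Finset.filter_congr
  intro p _
  constructor
  · rintro ⟨hno, -, -⟩
    rintro ⟨i, j, hij, h1, h2⟩
    exact hno i j hij (lt_of_lt_of_le j.2 ha) ⟨h1, h2⟩
  · intro h
    refine ⟨?_, ?_, ?_⟩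
    · intro i j hij hj hca
      exact h ⟨i, j, hij, hca.1, hca.2⟩
    · intro i j hij hbi
      exact absurd j.2 (by omega)
    · intro i j hij hbi
      exact absurd j.2 (by omega)

lemma ff_zero {n b : ℕ} : ff n 0 b = ff n 1 b := by
  unfold ff
  apply Finset.sum_congr _ (fun _ _ => rfl)
  apply Finset.filter_congr
  intro p _
  have h0 : NoCA 0 p.1 p.2 := fun i j hij hj => by omega
  have h1 : NoCA 1 p.1 p.2 := fun i j hij hj => by omega
  tauto

lemma telescope (n : ℕ) (hn : 1 ≤ n) :
    ∑ m ∈ Finset.range (n+1), (-1 : Polynomial ℚ)^m * ff n m m = 0 := by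
  have aux : ∀ k, k + 1 ≤ n → ∑ m ∈ Finset.range (k+1), (-1 : Polynomial ℚ)^m * ff n m m
      = (-1 : Polynomial ℚ)^k * ff n (k+1) k := by
    intro k
    induction k with
    | zero =>
      intro _
      rw [Finset.range_one, Finset.sum_singleton, pow_zero, one_mul, one_mul, ff_zero]
    | succ k ih =>
      intro h
      rw [Finset.sum_range_succ, ih (by omega), ff_split (by omega), pow_succ]
      ring
  rcases n with - | n'
  · omega
  rw [Finset.sum_range_succ, aux n' (by omega)]
  rw [ff_eq_W (by omega) (by omega), ff_eq_W (by omega) (by omega), pow_succ]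
  ring

lemma qFact_ne_zero (n : ℕ) : qFact n ≠ 0 := by
  unfold qFact
  apply Finset.prod_ne_zero_iff.mpr
  intro i _ h
  have h2 := congrArg (Polynomial.eval 1) h
  rw [Polynomial.eval_zero] at h2
  unfold qInt at h2
  rw [Polynomial.eval_finset_sum] at h2
  simp only [Polynomial.eval_pow, Polynomial.eval_X, one_pow, Finset.sum_const,
    Finset.card_range, nsmul_eq_mul, mul_one] at h2
  exact absurd h2 (by positivity)

lemma W_zero : W 0 = 1 := by
  unfold W
  have h1 : (univ.filter (fun p : Perm (Fin 0) × Perm (Fin 0) => ¬ CommonAscent p.1 p.2))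
      = univ := by
    apply Finset.filter_true_of_mem
    intro p _
    rintro ⟨i, -, -⟩
    exact i.elim0
  rw [h1, Finset.sum_congr rfl (fun p _ => by
    rw [inversions_small (by omega) p.1, inversions_small (by omega) p.2])]
  simp [Finset.card_univ, Fintype.card_perm]

lemma alt_sum_ff (n : ℕ) (hn : 1 ≤ n) :
    ∑ x ∈ Finset.HasAntidiagonal.antidiagonal n, ((-1 : Polynomial ℚ))^x.1 * ff n x.2 x.2 = 0 := by
  rw [Finset.Nat.sum_antidiagonal_eq_sum_range_succ_mk]
  have hre := Finset.sum_range_reflect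
    (fun k => ((-1 : Polynomial ℚ))^k * ff n (n - k) (n - k)) (n+1)
  show ∑ k ∈ Finset.range (n+1), ((-1 : Polynomial ℚ))^k * ff n (n - k) (n - k) = 0
  rw [← hre]
  have hcong : ∀ j ∈ Finset.range (n+1),
      ((-1 : Polynomial ℚ))^(n + 1 - 1 - j) * ff n (n - (n + 1 - 1 - j)) (n - (n + 1 - 1 - j))
      = ((-1 : Polynomial ℚ))^n * (((-1 : Polynomial ℚ))^j * ff n j j) := by
    intro j hj
    rw [Finset.mem_range] at hj
    have e1 : n + 1 - 1 - j = n - j := by omega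
    have e2 : n - (n - j) = j := by omega
    rw [e1, e2]
    have e3 : ((-1 : Polynomial ℚ))^(n - j) = ((-1 : Polynomial ℚ))^n * ((-1 : Polynomial ℚ))^j := by
      rw [← pow_add, show n + j = (n - j) + 2 * j by omega, pow_add, pow_mul, neg_one_sq, one_pow,
        mul_one]
    rw [e3, mul_assoc]
  rw [Finset.sum_congr rfl hcong, ← Finset.mul_sum, telescope n hn, mul_zero]

theorem qBessel_reciprocal' :
    (PowerSeries.mk fun n =>
        ((-1 : RatFunc ℚ)) ^ n / (algebraMap (Polynomial ℚ) (RatFunc ℚ) (qFact n)) ^ 2) *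
      (PowerSeries.mk fun n =>
        algebraMap (Polynomial ℚ) (RatFunc ℚ) (W n) /
          (algebraMap (Polynomial ℚ) (RatFunc ℚ) (qFact n)) ^ 2) = 1 := by
  have hA : ∀ k : ℕ, (algebraMap (Polynomial ℚ) (RatFunc ℚ) (qFact k)) ≠ 0 :=
    fun k => RatFunc.algebraMap_ne_zero (qFact_ne_zero k)
  apply PowerSeries.ext
  intro N
  rw [PowerSeries.coeff_mul, PowerSeries.coeff_one]
  simp only [PowerSeries.coeff_mk]
  rcases N with - | n
  · rw [Finset.Nat.antidiagonal_zero, Finset.sum_singleton, if_pos rfl]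
    rw [W_zero]
    have h0 : qFact 0 = 1 := Finset.prod_range_zero _
    rw [h0]
    simp
  · rw [if_neg (by omega)]
    have hterm : ∀ x ∈ Finset.HasAntidiagonal.antidiagonal (n+1),
        ((-1 : RatFunc ℚ))^x.1 / (algebraMap (Polynomial ℚ) (RatFunc ℚ) (qFact x.1))^2 *
          (algebraMap (Polynomial ℚ) (RatFunc ℚ) (W x.2) /
            (algebraMap (Polynomial ℚ) (RatFunc ℚ) (qFact x.2))^2)
        = ((-1 : RatFunc ℚ))^x.1 *
            algebraMap (Polynomial ℚ) (RatFunc ℚ) (ff (n+1) x.2 x.2) /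
            (algebraMap (Polynomial ℚ) (RatFunc ℚ) (qFact (n+1)))^2 := by
      intro x hx
      have hsum : x.1 + x.2 = n + 1 := Finset.HasAntidiagonal.mem_antidiagonal.mp hx
      have hj : x.2 ≤ n + 1 := by omega
      have hpoly : (qFact x.2)^2 * (qFact x.1)^2 * ff (n+1) x.2 x.2
          = (qFact (n+1))^2 * W x.2 := by
        rw [ff_eq hj]
        have hphi := phi_mul hj
        have hx1 : n + 1 - x.2 = x.1 := by omega
        rw [hx1] at hphi
        calc (qFact x.2)^2 * (qFact x.1)^2 * (W x.2 * (phi (n+1) x.2 * phi (n+1) x.2))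
            = W x.2 * ((qFact x.2 * qFact x.1 * phi (n+1) x.2) *
                (qFact x.2 * qFact x.1 * phi (n+1) x.2)) := by ring
          _ = (qFact (n+1))^2 * W x.2 := by rw [hphi]; ring
      have halg := congrArg (algebraMap (Polynomial ℚ) (RatFunc ℚ)) hpoly
      rw [map_mul, map_mul, map_mul, map_pow, map_pow, map_pow] at halg
      rw [div_mul_div_comm, div_eq_div_iff
        (by exact mul_ne_zero (pow_ne_zero 2 (hA x.1)) (pow_ne_zero 2 (hA x.2)))
        (pow_ne_zero 2 (hA (n+1)))]
      linear_combination (-((-1 : RatFunc ℚ))^x.1) * halg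
    rw [Finset.sum_congr rfl hterm, ← Finset.sum_div]
    have hnum : ∑ x ∈ Finset.HasAntidiagonal.antidiagonal (n+1),
        ((-1 : RatFunc ℚ))^x.1 * algebraMap (Polynomial ℚ) (RatFunc ℚ) (ff (n+1) x.2 x.2)
        = 0 := by
      have hmap := congrArg (algebraMap (Polynomial ℚ) (RatFunc ℚ)) (alt_sum_ff (n+1) (by omega))
      rw [map_sum, map_zero] at hmap
      rw [← hmap]
      apply Finset.sum_congr rfl
      intro x _
      rw [map_mul, map_pow]
      simp
    rw [hnum, zero_div]

/-- with `F(z) = ∑ (-1)^n z^n/([n]_q!)^2` and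
`G(z) = ∑ W_n(q) z^n/([n]_q!)^2` as formal power series over `ℚ(q)`,
we have `F(z)·G(z) = 1`. -/
theorem qBessel_reciprocal :
    (PowerSeries.mk fun n =>
        ((-1 : RatFunc ℚ)) ^ n / (algebraMap (Polynomial ℚ) (RatFunc ℚ) (qFact n)) ^ 2) *
      (PowerSeries.mk fun n =>
        algebraMap (Polynomial ℚ) (RatFunc ℚ) (W n) /
          (algebraMap (Polynomial ℚ) (RatFunc ℚ) (qFact n)) ^ 2) = 1 := by
  exact qBessel_reciprocal'
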